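/- Under the matching condition p_{ig} = φ_{ig} Σ_k a_k τ_k, the difference Var(B) − Var(A) equals 2 Σ_{i<j} Σ_{g=1}^G φ_{ig} φ_{jg} (Σ_{k=1}^K a_k² τ_k − (Σ_{k=1}^K a_k τ_k)²) π_g. -/

import Mathlib

open MeasureTheory ProbabilityTheory

namespace LcaElcaAux

variable {Ω : Type*} [MeasurableSpace Ω] {μ : Measure Ω}

lemma eq_indicator (X : Ω → ℝ) (h01 : ∀ ω, X ω = 0 ∨ X ω = 1) :
    X = Set.indicator {ω | X ω = 1} (fun _ => (1:ℝ)) := by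
  funext ω
  by_cases h : X ω = 1
  · simp [Set.indicator, h]
  · rcases h01 ω with h0 | h1
    · simp [Set.indicator, h, h0]
    · exact absurd h1 h

lemma integral01 [IsFiniteMeasure μ] (X : Ω → ℝ) (hX : Measurable X)
    (h01 : ∀ ω, X ω = 0 ∨ X ω = 1) :
    ∫ ω, X ω ∂μ = (μ {ω | X ω = 1}).toReal := by
  have hs : MeasurableSet {ω | X ω = 1} := hX (measurableSet_singleton 1)
  conv_lhs => rw [eq_indicator X h01]
  rw [integral_indicator_const (1:ℝ) hs]
  simp
  rfl

lemma integrable01 [IsFiniteMeasure μ] (X : Ω → ℝ) (hX : Measurable X)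
    (h01 : ∀ ω, X ω = 0 ∨ X ω = 1) : Integrable X μ := by
  have hs : MeasurableSet {ω | X ω = 1} := hX (measurableSet_singleton 1)
  rw [eq_indicator X h01]
  exact (integrable_const (1:ℝ)).indicator hs

lemma prod01 (X Y : Ω → ℝ) (hX : ∀ ω, X ω = 0 ∨ X ω = 1) (hY : ∀ ω, Y ω = 0 ∨ Y ω = 1) :
    ∀ ω, X ω * Y ω = 0 ∨ X ω * Y ω = 1 := by
  intro ω
  rcases hX ω with h | h <;> rcases hY ω with h' | h' <;> simp [h, h']

lemma prod01_set (X Y : Ω → ℝ) (hX : ∀ ω, X ω = 0 ∨ X ω = 1) (hY : ∀ ω, Y ω = 0 ∨ Y ω = 1) :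
    {ω | X ω * Y ω = 1} = {ω | X ω = 1} ∩ {ω | Y ω = 1} := by
  ext ω
  simp only [Set.mem_setOf_eq, Set.mem_inter_iff]
  constructor
  · intro h
    rcases hX ω with h' | h' <;> rcases hY ω with h'' | h'' <;>
      simp [h', h''] at h ⊢
  · rintro ⟨h1, h2⟩; rw [h1, h2, mul_one]

lemma measure_partition {G : ℕ} (Z : Ω → Fin G) (hZ : Measurable Z) {S : Set Ω}
    (hS : MeasurableSet S) :
    μ S = ∑ g, μ (S ∩ {ω | Z ω = g}) := by
  have hU : S = ⋃ g, S ∩ {ω | Z ω = g} := by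
    ext ω; simp
  have hdisj : Pairwise (Function.onFun Disjoint (fun g => S ∩ {ω | Z ω = g})) := by
    intro g g' hgg'
    simp only [Function.onFun, Set.disjoint_left]
    rintro ω ⟨_, h1⟩ ⟨_, h2⟩
    exact hgg' (h1.symm.trans h2)
  have hmeas : ∀ g, MeasurableSet (S ∩ {ω | Z ω = g}) := fun g =>
    hS.inter (hZ (measurableSet_singleton g))
  conv_lhs => rw [hU]
  rw [measure_iUnion hdisj hmeas, tsum_fintype]

lemma sum_symm_ne {N : ℕ} (f : Fin N → Fin N → ℝ) (hsymm : ∀ i j, f i j = f j i) :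
    ∑ i, ∑ j, (if i = j then 0 else f i j)
      = 2 * ∑ i, ∑ j ∈ Finset.univ.filter (fun j => i < j), f i j := by
  have step : ∀ i : Fin N, ∑ j, (if i = j then 0 else f i j)
      = ∑ j ∈ Finset.univ.filter (fun j => i < j), f i j
        + ∑ j ∈ Finset.univ.filter (fun j => j < i), f i j := by
    intro i
    rw [← Finset.sum_filter_add_sum_filter_not Finset.univ (fun j => i < j)]
    congr 1
    · refine Finset.sum_congr rfl ?_
      intro j hj
      simp only [Finset.mem_filter] at hj
      rw [if_neg (ne_of_lt hj.2)]
    · have hset : Finset.univ.filter (fun j => ¬ i < j)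
          = insert i (Finset.univ.filter (fun j => j < i)) := by
        ext j
        simp only [Finset.mem_filter, Finset.mem_univ, true_and, Finset.mem_insert, not_lt]
        constructor
        · intro h
          rcases lt_or_eq_of_le h with h' | h'
          · exact Or.inr h'
          · exact Or.inl h'
        · rintro (rfl | h)
          · exact le_refl _
          · exact le_of_lt h
      rw [hset, Finset.sum_insert (by simp), if_pos rfl, zero_add]
      refine Finset.sum_congr rfl ?_
      intro j hj
      simp only [Finset.mem_filter] at hj
      rw [if_neg (ne_of_gt hj.2)]
  calc ∑ i, ∑ j, (if i = j then 0 else f i j)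
      = ∑ i, (∑ j ∈ Finset.univ.filter (fun j => i < j), f i j
        + ∑ j ∈ Finset.univ.filter (fun j => j < i), f i j) := by
        exact Finset.sum_congr rfl fun i _ => step i
    _ = ∑ i, ∑ j ∈ Finset.univ.filter (fun j => i < j), f i j
        + ∑ i, ∑ j ∈ Finset.univ.filter (fun j => j < i), f i j := Finset.sum_add_distrib
    _ = 2 * ∑ i, ∑ j ∈ Finset.univ.filter (fun j => i < j), f i j := by
        have : ∑ i, ∑ j ∈ Finset.univ.filter (fun j => j < i), f i j
            = ∑ i, ∑ j ∈ Finset.univ.filter (fun j => i < j), f i j := by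
          rw [Finset.sum_comm' (t' := Finset.univ) (s' := fun j => Finset.univ.filter (fun i => j < i)) (by simp)]
          exact Finset.sum_congr rfl fun i _ => Finset.sum_congr rfl fun j _ => hsymm j i
        rw [this]; ring

lemma measSet {α : Type*} [MeasurableSpace α] [MeasurableSingletonClass α]
    {X : Ω → α} (hX : Measurable X) (c : α) : MeasurableSet {ω | X ω = c} :=
  hX (measurableSet_singleton c)

lemma variance_sum_eq {N : ℕ} [IsProbabilityMeasure μ] (X : Fin N → Ω → ℝ)
    (hXm : ∀ i, Measurable (X i)) (hX01 : ∀ i ω, X i ω = 0 ∨ X i ω = 1) :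
    variance (fun ω => ∑ i, X i ω) μ
      = (∑ i, ∑ j, ∫ ω, X i ω * X j ω ∂μ) - (∑ i, ∫ ω, X i ω ∂μ) ^ 2 := by
  have hXmeas : Measurable (fun ω => ∑ i, X i ω) :=
    Finset.measurable_sum _ fun i _ => hXm i
  have hmem : MemLp (fun ω => ∑ i, X i ω) 2 μ := by
    refine MemLp.of_bound hXmeas.aestronglyMeasurable (N : ℝ) (ae_of_all _ fun ω => ?_)
    calc ‖∑ i, X i ω‖ ≤ ∑ i, ‖X i ω‖ := norm_sum_le _ _
      _ ≤ ∑ _i : Fin N, (1 : ℝ) := by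
          refine Finset.sum_le_sum fun i _ => ?_
          rcases hX01 i ω with h | h <;> simp [h]
      _ = N := by simp
  rw [variance_eq_sub hmem]
  congr 1
  · rw [show (fun ω => ∑ i, X i ω) ^ 2 = fun ω => ∑ i, ∑ j, X i ω * X j ω by
      funext ω
      simp only [Pi.pow_apply]
      rw [sq, Finset.sum_mul_sum]]
    beta_reduce
    rw [integral_finset_sum _ fun i _ => integrable_finset_sum _ fun j _ =>
      integrable01 (fun ω => X i ω * X j ω) ((hXm i).mul (hXm j)) (prod01 _ _ (hX01 i) (hX01 j))]
    exact Finset.sum_congr rfl fun i _ => integral_finset_sum _ fun j _ =>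
      integrable01 (fun ω => X i ω * X j ω) ((hXm i).mul (hXm j)) (prod01 _ _ (hX01 i) (hX01 j))
  · congr 1
    exact integral_finset_sum _ fun i _ => integrable01 _ (hXm i) (hX01 i)

end LcaElcaAux

open LcaElcaAux in
theorem lca_elca_variance_difference {N G K : ℕ}
    {Ω₁ Ω₂ : Type*} [MeasurableSpace Ω₁] [MeasurableSpace Ω₂]
    (μ₁ : Measure Ω₁) [IsProbabilityMeasure μ₁]
    (μ₂ : Measure Ω₂) [IsProbabilityMeasure μ₂]
    (Z : Ω₁ → Fin G) (A : Fin N → Ω₁ → ℝ)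
    (Z₁ : Ω₂ → Fin G) (Z₂ : Ω₂ → Fin K) (B : Fin N → Ω₂ → ℝ)
    (π : Fin G → ℝ) (τ : Fin K → ℝ) (a : Fin K → ℝ)
    (p : Fin N → Fin G → ℝ) (φ : Fin N → Fin G → ℝ)
    (hπ0 : ∀ g, 0 ≤ π g) (hπ1 : ∑ g, π g = 1)
    (hτ0 : ∀ k, 0 ≤ τ k) (hτ1 : ∑ k, τ k = 1)
    (ha : ∀ k, 0 < a k ∧ a k ≤ 1) (hφ : ∀ i g, 0 ≤ φ i g ∧ φ i g ≤ 1)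
    (hmatch : ∀ i g, p i g = φ i g * ∑ k, a k * τ k)
    (hZmeas : Measurable Z) (hAmeas : ∀ i, Measurable (A i))
    (hA01 : ∀ i ω, A i ω = 0 ∨ A i ω = 1)
    (hπA : ∀ g, (μ₁ {ω | Z ω = g}).toReal = π g)
    (hcondA : ∀ i g, (μ₁ ({ω | A i ω = 1} ∩ {ω | Z ω = g})).toReal = p i g * π g)
    (hpairA : ∀ i j g, i ≠ j →
      (μ₁ ({ω | A i ω = 1} ∩ {ω | A j ω = 1} ∩ {ω | Z ω = g})).toReal
        = p i g * p j g * π g)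
    (hZ₁meas : Measurable Z₁) (hZ₂meas : Measurable Z₂) (hBmeas : ∀ i, Measurable (B i))
    (hB01 : ∀ i ω, B i ω = 0 ∨ B i ω = 1)
    (hπB : ∀ g k, (μ₂ ({ω | Z₁ ω = g} ∩ {ω | Z₂ ω = k})).toReal = π g * τ k)
    (hcondB : ∀ i g k,
      (μ₂ ({ω | B i ω = 1} ∩ {ω | Z₁ ω = g} ∩ {ω | Z₂ ω = k})).toReal
        = a k * φ i g * (π g * τ k))
    (hpairB : ∀ i j g k, i ≠ j →
      (μ₂ ({ω | B i ω = 1} ∩ {ω | B j ω = 1} ∩ {ω | Z₁ ω = g} ∩ {ω | Z₂ ω = k})).toReal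
        = (a k) ^ 2 * φ i g * φ j g * (π g * τ k)) :
    variance (fun ω => ∑ i, B i ω) μ₂ - variance (fun ω => ∑ i, A i ω) μ₁
      = 2 * ∑ i, ∑ j ∈ Finset.univ.filter (fun j => i < j), ∑ g,
          φ i g * φ j g * (∑ k, (a k) ^ 2 * τ k - (∑ k, a k * τ k) ^ 2) * π g := by
  -- partition identities
  have keyA : ∀ (S : Set Ω₁), MeasurableSet S →
      (μ₁ S).toReal = ∑ g, (μ₁ (S ∩ {ω | Z ω = g})).toReal := by
    intro S hS
    rw [measure_partition Z hZmeas hS,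
      ENNReal.toReal_sum (fun _ _ => measure_ne_top _ _)]
  have keyB : ∀ (S : Set Ω₂), MeasurableSet S →
      (μ₂ S).toReal = ∑ g, ∑ k, (μ₂ (S ∩ {ω | Z₁ ω = g} ∩ {ω | Z₂ ω = k})).toReal := by
    intro S hS
    rw [measure_partition Z₁ hZ₁meas hS,
      ENNReal.toReal_sum (fun _ _ => measure_ne_top _ _)]
    refine Finset.sum_congr rfl fun g _ => ?_
    rw [measure_partition Z₂ hZ₂meas (hS.inter (measSet hZ₁meas g)),
      ENNReal.toReal_sum (fun _ _ => measure_ne_top _ _)]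
  -- first moments
  have hmA : ∀ i, ∫ ω, A i ω ∂μ₁ = ∑ g, p i g * π g := by
    intro i
    rw [integral01 (A i) (hAmeas i) (hA01 i),
      keyA _ (measSet (hAmeas i) 1)]
    exact Finset.sum_congr rfl fun g _ => hcondA i g
  have hmB : ∀ i, ∫ ω, B i ω ∂μ₂ = ∑ g, ∑ k, a k * φ i g * (π g * τ k) := by
    intro i
    rw [integral01 (B i) (hBmeas i) (hB01 i),
      keyB _ (measSet (hBmeas i) 1)]
    exact Finset.sum_congr rfl fun g _ => Finset.sum_congr rfl fun k _ => hcondB i g k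
  -- second moments (off-diagonal)
  have hcAA : ∀ i j, i ≠ j → ∫ ω, A i ω * A j ω ∂μ₁ = ∑ g, p i g * p j g * π g := by
    intro i j hij
    rw [integral01 (fun ω => A i ω * A j ω) ((hAmeas i).mul (hAmeas j)) (prod01 _ _ (hA01 i) (hA01 j)),
      prod01_set _ _ (hA01 i) (hA01 j),
      keyA _ ((measSet (hAmeas i) 1).inter
        (measSet (hAmeas j) 1))]
    exact Finset.sum_congr rfl fun g _ => hpairA i j g hij
  have hcBB : ∀ i j, i ≠ j → ∫ ω, B i ω * B j ω ∂μ₂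
      = ∑ g, ∑ k, (a k) ^ 2 * φ i g * φ j g * (π g * τ k) := by
    intro i j hij
    rw [integral01 (fun ω => B i ω * B j ω) ((hBmeas i).mul (hBmeas j)) (prod01 _ _ (hB01 i) (hB01 j)),
      prod01_set _ _ (hB01 i) (hB01 j),
      keyB _ ((measSet (hBmeas i) 1).inter
        (measSet (hBmeas j) 1))]
    exact Finset.sum_congr rfl fun g _ => Finset.sum_congr rfl fun k _ => hpairB i j g k hij
  -- diagonal second moments
  have hdiagA : ∀ i, ∫ ω, A i ω * A i ω ∂μ₁ = ∫ ω, A i ω ∂μ₁ := by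
    intro i
    refine integral_congr_ae (ae_of_all _ fun ω => ?_)
    rcases hA01 i ω with h | h <;> simp [h]
  have hdiagB : ∀ i, ∫ ω, B i ω * B i ω ∂μ₂ = ∫ ω, B i ω ∂μ₂ := by
    intro i
    refine integral_congr_ae (ae_of_all _ fun ω => ?_)
    rcases hB01 i ω with h | h <;> simp [h]
  rw [variance_sum_eq B hBmeas hB01, variance_sum_eq A hAmeas hA01]
  -- means agree
  have hmean : ∀ i, ∫ ω, B i ω ∂μ₂ = ∫ ω, A i ω ∂μ₁ := by
    intro i
    rw [hmA, hmB]
    refine Finset.sum_congr rfl fun g _ => ?_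
    have : ∀ k, a k * φ i g * (π g * τ k) = (a k * τ k) * (φ i g * π g) := fun k => by ring
    rw [Finset.sum_congr rfl (fun k _ => this k), ← Finset.sum_mul, hmatch i g]
    ring
  have hmeansum : (∑ i, ∫ ω, B i ω ∂μ₂) = ∑ i, ∫ ω, A i ω ∂μ₁ :=
    Finset.sum_congr rfl fun i _ => hmean i
  rw [hmeansum]
  have hdiff : (∑ i, ∑ j, ∫ ω, B i ω * B j ω ∂μ₂) - (∑ i, ∑ j, ∫ ω, A i ω * A j ω ∂μ₁)
      = ∑ i, ∑ j, (if i = j then 0 else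
          ∑ g, φ i g * φ j g * (∑ k, (a k) ^ 2 * τ k - (∑ k, a k * τ k) ^ 2) * π g) := by
    rw [← Finset.sum_sub_distrib]
    refine Finset.sum_congr rfl fun i _ => ?_
    rw [← Finset.sum_sub_distrib]
    refine Finset.sum_congr rfl fun j _ => ?_
    by_cases hij : i = j
    · subst hij
      rw [if_pos rfl, hdiagA, hdiagB, hmean, sub_self]
    · rw [if_neg hij, hcBB i j hij, hcAA i j hij, ← Finset.sum_sub_distrib]
      refine Finset.sum_congr rfl fun g _ => ?_
      have h1 : ∀ k, (a k) ^ 2 * φ i g * φ j g * (π g * τ k)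
          = ((a k) ^ 2 * τ k) * (φ i g * φ j g * π g) := fun k => by ring
      rw [Finset.sum_congr rfl (fun k _ => h1 k), ← Finset.sum_mul, hmatch i g, hmatch j g]
      ring
  calc (∑ i, ∑ j, ∫ ω, B i ω * B j ω ∂μ₂) - (∑ i, ∫ ω, A i ω ∂μ₁) ^ 2
        - ((∑ i, ∑ j, ∫ ω, A i ω * A j ω ∂μ₁) - (∑ i, ∫ ω, A i ω ∂μ₁) ^ 2)
      = (∑ i, ∑ j, ∫ ω, B i ω * B j ω ∂μ₂)
        - (∑ i, ∑ j, ∫ ω, A i ω * A j ω ∂μ₁) := by ring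
    _ = ∑ i, ∑ j, (if i = j then 0 else
          ∑ g, φ i g * φ j g * (∑ k, (a k) ^ 2 * τ k - (∑ k, a k * τ k) ^ 2) * π g) := hdiff
    _ = 2 * ∑ i, ∑ j ∈ Finset.univ.filter (fun j => i < j), ∑ g,
          φ i g * φ j g * (∑ k, (a k) ^ 2 * τ k - (∑ k, a k * τ k) ^ 2) * π g := by
        refine sum_symm_ne _ fun i j => ?_
        exact Finset.sum_congr rfl fun g _ => by ring
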